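/- Let α(s) = sgn(s)·β(|s|) with β : (0,∞) → [0,∞) measurable, and assume α₁ = 2∫₀^∞ s·β(s) ds and α₃ = 2∫₀^∞ s³·β(s) ds are finite with α₁ > 0; set C_α := 4π³·α₃/(3·α₁). Then for every ε > 0 and every ξ > 0 with C_α·ε²·ξ² < 2π, one has S_ε(ξ) > 0 and 0 ≤ 2π/S_ε(ξ) − 1/ξ ≤ C_α·ε²·ξ/(2π − C_α·ε²·ξ²). (Near-field bound on the deviation of the nonlocal antiderivative's Fourier multiplier 2π/S_ε(ξ) from the classical multiplier 1/ξ.) -/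

import Mathlib

open MeasureTheory Real Set Filter

lemma aux_sin_ge_sub_cube {x : ℝ} (hx : 0 ≤ x) : x - x ^ 3 / 6 ≤ Real.sin x := by
  have hder : ∀ y : ℝ, HasDerivAt (fun z : ℝ => Real.sin z - (z - z ^ 3 / 6))
      (Real.cos y - (1 - y ^ 2 / 2)) y := by
    intro y
    have h2 : HasDerivAt (fun z : ℝ => z - z ^ 3 / 6) (1 - y ^ 2 / 2) y := by
      have h3 := (hasDerivAt_pow 3 y).div_const 6
      have h4 := (hasDerivAt_id y).sub h3
      rw [show (1 - y ^ 2 / 2 : ℝ) = 1 - ((3 : ℕ) : ℝ) * y ^ (3 - 1) / 6 by norm_num; ring]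
      exact h4
    exact (Real.hasDerivAt_sin y).sub h2
  have mono : MonotoneOn (fun z : ℝ => Real.sin z - (z - z ^ 3 / 6)) (Set.Ici 0) := by
    apply monotoneOn_of_deriv_nonneg (convex_Ici 0)
    · exact Continuous.continuousOn (by continuity)
    · intro y _
      exact (hder y).differentiableAt.differentiableWithinAt
    · intro y _
      rw [(hder y).deriv]
      have := Real.one_sub_sq_div_two_le_cos (x := y)
      linarith
  have h0 := mono Set.self_mem_Ici (Set.mem_Ici.mpr hx) hx
  simp only [Real.sin_zero] at h0
  norm_num at h0
  linarith

/-- near-field bound on the deviation of the nonlocal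
antiderivative's Fourier multiplier `2π/S_ε(ξ)` from the classical `1/ξ`. -/
theorem stmt_15 (β : ℝ → ℝ) (hβmeas : Measurable β) (hnn : ∀ s, 0 < s → 0 ≤ β s)
    (hint1 : IntegrableOn (fun s => s * β s) (Set.Ioi 0))
    (hint3 : IntegrableOn (fun s => s ^ 3 * β s) (Set.Ioi 0))
    (α₁ α₃ : ℝ)
    (hα₁ : α₁ = 2 * ∫ s in Set.Ioi (0:ℝ), s * β s)
    (hα₃ : α₃ = 2 * ∫ s in Set.Ioi (0:ℝ), s ^ 3 * β s)
    (hα₁pos : 0 < α₁)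
    (Cα : ℝ) (hC : Cα = 4 * π ^ 3 * α₃ / (3 * α₁))
    (S : ℝ → ℝ → ℝ)
    (hS : ∀ ε ξ, S ε ξ =
      2 * ∫ t in Set.Ioi (0:ℝ), Real.sin (2 * π * ξ * t) * (β (t / ε) / (ε ^ 2 * α₁)))
    (ε : ℝ) (hε : 0 < ε) (ξ : ℝ) (hξ : 0 < ξ)
    (hsmall : Cα * ε ^ 2 * ξ ^ 2 < 2 * π) :
    0 < S ε ξ ∧ 0 ≤ 2 * π / S ε ξ - 1 / ξ ∧
      2 * π / S ε ξ - 1 / ξ ≤ Cα * ε ^ 2 * ξ / (2 * π - Cα * ε ^ 2 * ξ ^ 2) := by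
  set J1 : ℝ := ∫ s in Set.Ioi (0:ℝ), s * β s with hJ1
  set J3 : ℝ := ∫ s in Set.Ioi (0:ℝ), s ^ 3 * β s with hJ3
  have hJ1pos : 0 < J1 := by linarith
  set k : ℝ := 2 * π * ξ * ε with hk
  have hkpos : 0 < k := by rw [hk]; positivity
  set I : ℝ := ∫ s in Set.Ioi (0:ℝ), Real.sin (k * s) * β s with hI
  -- change of variables
  have harg : ∀ t : ℝ, k * (ε⁻¹ * t) = 2 * π * ξ * t := by
    intro t; rw [hk]; field_simp
  have hSval : S ε ξ = 2 * (ε * (I / (ε ^ 2 * α₁))) := by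
    rw [hS]
    congr 1
    have hcv := integral_comp_mul_left_Ioi
      (fun s => Real.sin (k * s) * (β s / (ε ^ 2 * α₁))) 0 (inv_pos.mpr hε)
    simp only [mul_zero, smul_eq_mul, inv_inv] at hcv
    have heq : (∫ t in Set.Ioi (0:ℝ), Real.sin (2 * π * ξ * t) * (β (t / ε) / (ε ^ 2 * α₁)))
        = ∫ t in Set.Ioi (0:ℝ), Real.sin (k * (ε⁻¹ * t)) * (β (ε⁻¹ * t) / (ε ^ 2 * α₁)) := by
      congr 1
      funext t
      rw [harg t, div_eq_inv_mul t ε]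
    rw [heq, hcv]
    have : (∫ s in Set.Ioi (0:ℝ), Real.sin (k * s) * (β s / (ε ^ 2 * α₁)))
        = I / (ε ^ 2 * α₁) := by
      rw [hI, ← integral_div]
      congr 1
      funext s
      ring
    rw [this]
  -- integrability of the sine integrand
  have hImeas : AEStronglyMeasurable (fun s => Real.sin (k * s) * β s)
      (volume.restrict (Set.Ioi 0)) :=
    ((Real.measurable_sin.comp (measurable_const_mul k)).mul hβmeas).aestronglyMeasurable
  have hIint : IntegrableOn (fun s => Real.sin (k * s) * β s) (Set.Ioi 0) := by
    apply Integrable.mono' (hint1.const_mul k) hImeas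
    filter_upwards [ae_restrict_mem measurableSet_Ioi] with s hs
    have hb := hnn s hs
    have hs' : (0:ℝ) < s := hs
    have hks : 0 ≤ k * s := mul_nonneg hkpos.le hs'.le
    rw [Real.norm_eq_abs, abs_mul, abs_of_nonneg hb]
    have habs : |Real.sin (k * s)| ≤ k * s := by
      calc |Real.sin (k * s)| ≤ |k * s| := Real.abs_sin_le_abs
        _ = k * s := abs_of_nonneg hks
    calc |Real.sin (k * s)| * β s ≤ (k * s) * β s :=
          mul_le_mul_of_nonneg_right habs hb
      _ = k * (s * β s) := by ring
  -- upper bound on I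
  have hIup : I ≤ k * J1 := by
    have hptw : ∀ s ∈ Set.Ioi (0:ℝ), Real.sin (k * s) * β s ≤ k * (s * β s) := by
      intro s hs
      have hb := hnn s hs
      have hs' : (0:ℝ) < s := hs
      have hks : 0 ≤ k * s := mul_nonneg hkpos.le hs'.le
      calc Real.sin (k * s) * β s ≤ (k * s) * β s :=
            mul_le_mul_of_nonneg_right (Real.sin_le hks) hb
        _ = k * (s * β s) := by ring
    have h := setIntegral_mono_on hIint (hint1.const_mul k) measurableSet_Ioi hptw
    rwa [integral_const_mul] at h
  -- lower bound on I
  have hIlow : k * J1 - k ^ 3 / 6 * J3 ≤ I := by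
    have hlowint : IntegrableOn
        (fun s => k * (s * β s) - k ^ 3 / 6 * (s ^ 3 * β s)) (Set.Ioi 0) :=
      (hint1.const_mul k).sub (hint3.const_mul (k ^ 3 / 6))
    have hptw : ∀ s ∈ Set.Ioi (0:ℝ),
        k * (s * β s) - k ^ 3 / 6 * (s ^ 3 * β s) ≤ Real.sin (k * s) * β s := by
      intro s hs
      have hb := hnn s hs
      have hs' : (0:ℝ) < s := hs
      have hks : 0 ≤ k * s := mul_nonneg hkpos.le hs'.le
      have hsin := aux_sin_ge_sub_cube hks
      calc k * (s * β s) - k ^ 3 / 6 * (s ^ 3 * β s)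
          = (k * s - (k * s) ^ 3 / 6) * β s := by ring
        _ ≤ Real.sin (k * s) * β s := mul_le_mul_of_nonneg_right hsin hb
    have h := setIntegral_mono_on hlowint hIint measurableSet_Ioi hptw
    rwa [integral_sub (hint1.const_mul k) (hint3.const_mul (k ^ 3 / 6)),
      integral_const_mul, integral_const_mul] at h
  -- bounds on S
  have hdenpos : 0 < ε ^ 2 * α₁ := by positivity
  have hSub : S ε ξ ≤ 2 * π * ξ := by
    have h1 : S ε ξ ≤ 2 * (ε * ((k * J1) / (ε ^ 2 * α₁))) := by
      rw [hSval]; gcongr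
    have h2 : 2 * (ε * ((k * J1) / (ε ^ 2 * α₁))) = 2 * π * ξ := by
      rw [hk, hα₁]
      field_simp
    linarith
  have hSlb : 2 * π * ξ - Cα * ε ^ 2 * ξ ^ 3 ≤ S ε ξ := by
    have h1 : 2 * (ε * ((k * J1 - k ^ 3 / 6 * J3) / (ε ^ 2 * α₁))) ≤ S ε ξ := by
      rw [hSval]; gcongr
    have h2 : 2 * (ε * ((k * J1 - k ^ 3 / 6 * J3) / (ε ^ 2 * α₁)))
        = 2 * π * ξ - Cα * ε ^ 2 * ξ ^ 3 := by
      rw [hC, hk, hα₁, hα₃]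
      field_simp
      ring
    linarith
  have hLpos : 0 < 2 * π * ξ - Cα * ε ^ 2 * ξ ^ 3 := by
    have := mul_pos hξ (sub_pos.mpr hsmall)
    nlinarith
  have hSpos : 0 < S ε ξ := lt_of_lt_of_le hLpos hSlb
  refine ⟨hSpos, ?_, ?_⟩
  · have h1 : (1:ℝ) / ξ = 2 * π / (2 * π * ξ) := by
      field_simp
    have h2 : 2 * π / (2 * π * ξ) ≤ 2 * π / S ε ξ := by
      gcongr
    linarith
  · have h2 : 2 * π / S ε ξ ≤ 2 * π / (2 * π * ξ - Cα * ε ^ 2 * ξ ^ 3) := by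
      gcongr
    have hsub : (0:ℝ) < 2 * π - Cα * ε ^ 2 * ξ ^ 2 := sub_pos.mpr hsmall
    have h3 : 2 * π / (2 * π * ξ - Cα * ε ^ 2 * ξ ^ 3) - 1 / ξ
        = Cα * ε ^ 2 * ξ / (2 * π - Cα * ε ^ 2 * ξ ^ 2) := by
      rw [show 2 * π * ξ - Cα * ε ^ 2 * ξ ^ 3 = ξ * (2 * π - Cα * ε ^ 2 * ξ ^ 2) by ring]
      have := hsub.ne'
      field_simp
      rw [div_sub_one (by linarith)]
      ring
    linarith
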